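/- arXiv:2507.04824 — 3 statements merged into one kernel-verified Lean document; each statement's English description precedes it below -/
import Mathlib

section
/- Let W be a real symmetric positive definite 2×2 matrix, D the antisymmetric matrix with D₁₂ = d, D₂₁ = −d, and F a real symmetric invertible 2×2 matrix. Then the trace norm of √W F⁻¹ D F⁻¹ √W equals 2√(det W) · |d| / |det F|. -/
open Matrix

/-- The positive semidefinite square root of a positive semidefinite matrix
(the definition `Matrix.PosSemidef.sqrt` of Mathlib of December 2024, since removed). -/
noncomputable def Matrix.PosSemidef.sqrt {n 𝕜 : Type*} [Fintype n] [DecidableEq n] [RCLike 𝕜]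
    [PartialOrder 𝕜] {A : Matrix n n 𝕜} (hA : A.PosSemidef) : Matrix n n 𝕜 :=
  hA.1.eigenvectorUnitary.1 * diagonal ((↑) ∘ (√·) ∘ hA.1.eigenvalues) *
  (star hA.1.eigenvectorUnitary : Matrix n n 𝕜)

/-- Trace norm of a real 2×2 matrix: `Tr √(AᵀA)`. -/
noncomputable def traceNorm (A : Matrix (Fin 2) (Fin 2) ℝ) : ℝ :=
  (Matrix.posSemidef_conjTranspose_mul_self A).sqrt.trace

theorem sqrt_eq_cfc' {A : Matrix (Fin 2) (Fin 2) ℝ} (hA : A.PosSemidef) :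
    hA.sqrt = cfc Real.sqrt A := by
  rw [hA.1.cfc_eq, IsHermitian.cfc, Unitary.conjStarAlgAut_apply]; rfl

theorem sqrt_isHermitian' {A : Matrix (Fin 2) (Fin 2) ℝ} (hA : A.PosSemidef) :
    hA.sqrt.IsHermitian := by
  rw [sqrt_eq_cfc']
  exact isHermitian_iff_isSelfAdjoint.mpr (cfc_predicate Real.sqrt A)

theorem sqrt_mul_self' {A : Matrix (Fin 2) (Fin 2) ℝ} (hA : A.PosSemidef) :
    hA.sqrt * hA.sqrt = A := by
  rw [sqrt_eq_cfc', ← cfc_mul Real.sqrt Real.sqrt A]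
  conv_rhs => rw [← cfc_id ℝ A (isHermitian_iff_isSelfAdjoint.mp hA.1)]
  apply cfc_congr
  intro x hx
  rw [hA.1.spectrum_real_eq_range_eigenvalues] at hx
  obtain ⟨i, rfl⟩ := hx
  exact Real.mul_self_sqrt (hA.eigenvalues_nonneg i)

theorem stmt_6 (W F : Matrix (Fin 2) (Fin 2) ℝ) (d : ℝ)
    (hW : W.PosDef) (hF : F.IsSymm) (hFdet : F.det ≠ 0) :
    traceNorm (hW.posSemidef.sqrt * F⁻¹ * !![0, d; -d, 0] * F⁻¹ * hW.posSemidef.sqrt)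
      = 2 * Real.sqrt W.det * |d| / |F.det| := by
  set S := hW.posSemidef.sqrt with hSdef
  set M := S * F⁻¹ * !![0, d; -d, 0] * F⁻¹ * S with hMdef
  have hS : Sᵀ = S := by
    have := (conjTranspose_eq_transpose_of_trivial S).symm.trans (sqrt_isHermitian' hW.posSemidef).eq
    simpa [Matrix.IsHermitian, Matrix.conjTranspose] using this
  have hFi : F⁻¹ᵀ = F⁻¹ := by
    rw [Matrix.transpose_nonsing_inv, hF.eq]
  have hDT : (!![0, d; -d, 0] : Matrix (Fin 2) (Fin 2) ℝ)ᵀ = -(!![0, d; -d, 0]) := by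
    ext i j; fin_cases i <;> fin_cases j <;> simp
  have hMT : Mᵀ = -M := by
    have h1 : Mᵀ = S * (F⁻¹ * (-(!![0, d; -d, 0]) * (F⁻¹ * S))) := by
      simp only [hMdef, Matrix.transpose_mul, Matrix.mul_assoc, hS, hFi, hDT]
    rw [h1, hMdef]
    simp only [Matrix.neg_mul, Matrix.mul_neg, Matrix.mul_assoc]
  set c := M 0 1 with hc
  have hM : M = !![0, c; -c, 0] := by
    have h00 := congrFun (congrFun hMT 0) 0
    have h11 := congrFun (congrFun hMT 1) 1
    have h10 := congrFun (congrFun hMT 0) 1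
    simp only [Matrix.transpose_apply, Matrix.neg_apply] at h00 h11 h10
    ext i j; fin_cases i <;> fin_cases j <;>
      simp [hc] <;> linarith
  have hMTM : Mᵀ * M = (c ^ 2) • (1 : Matrix (Fin 2) (Fin 2) ℝ) := by
    rw [hM]
    ext i j; fin_cases i <;> fin_cases j <;>
      simp [Matrix.mul_apply, Fin.sum_univ_succ] <;> ring
  -- sqrt of MᵀM is |c| • 1
  have hdiag : ((|c| : ℝ) • (1 : Matrix (Fin 2) (Fin 2) ℝ))
      = Matrix.diagonal (fun _ => |c|) := by
    ext i j
    by_cases h : i = j <;> simp [Matrix.one_apply, Matrix.diagonal_apply, h]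
  have habs : Matrix.PosSemidef ((|c| : ℝ) • (1 : Matrix (Fin 2) (Fin 2) ℝ)) := by
    rw [hdiag]
    exact Matrix.PosSemidef.diagonal (fun i => abs_nonneg c)
  have hsq : ((|c| : ℝ) • (1 : Matrix (Fin 2) (Fin 2) ℝ)) ^ 2 = Mᵀ * M := by
    rw [hMTM, sq, Matrix.smul_mul, Matrix.mul_smul, smul_smul, Matrix.one_mul,
      ← abs_mul, abs_mul_self, sq]
  have hsqrt : (Matrix.posSemidef_conjTranspose_mul_self M).sqrt
      = (|c| : ℝ) • (1 : Matrix (Fin 2) (Fin 2) ℝ) := by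
    rw [sqrt_eq_cfc']
    have hal : Mᴴ * M = algebraMap ℝ _ (c ^ 2) := by
      rw [conjTranspose_eq_transpose_of_trivial, hMTM, Algebra.algebraMap_eq_smul_one]
    rw [hal, cfc_algebraMap, Algebra.algebraMap_eq_smul_one, Real.sqrt_sq_eq_abs]
  have htn : traceNorm M = 2 * |c| := by
    rw [traceNorm, hsqrt, Matrix.trace_smul, Matrix.trace_one]
    simp; ring
  -- compute c² via det
  have hdetM : M.det = c ^ 2 := by
    rw [hM, Matrix.det_fin_two_of]; ring
  have hSS : S * S = W := sqrt_mul_self' hW.posSemidef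
  have hdetW : S.det * S.det = W.det := by
    rw [← Matrix.det_mul, hSS]
  have hdetD : (!![0, d; -d, 0] : Matrix (Fin 2) (Fin 2) ℝ).det = d ^ 2 := by
    rw [Matrix.det_fin_two_of]; ring
  have hdetM2 : M.det = W.det * d ^ 2 / F.det ^ 2 := by
    rw [hMdef, Matrix.det_mul, Matrix.det_mul, Matrix.det_mul, Matrix.det_mul,
      Matrix.det_nonsing_inv, hdetD, Ring.inverse_eq_inv', ← hdetW]
    field_simp
  have hc2 : c ^ 2 = W.det * d ^ 2 / F.det ^ 2 := by rw [← hdetM, hdetM2]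
  have hcabs : |c| = Real.sqrt W.det * |d| / |F.det| := by
    have h1 : |c| = Real.sqrt (c ^ 2) := (Real.sqrt_sq_eq_abs c).symm
    rw [h1, hc2, Real.sqrt_div (mul_nonneg hW.det_pos.le (sq_nonneg d)), Real.sqrt_mul hW.det_pos.le,
      Real.sqrt_sq_eq_abs, Real.sqrt_sq_eq_abs]
  rw [htn, hcabs]; ring
end

section
/- Let G be a 2×2 real symmetric positive definite matrix with diagonal entries G₁₁ ≤ a and G₂₂ ≤ b for some a, b > 0, let F = diag(a, b), and let W = [[w₁₁, w₁₂],[w₁₂, w₂₂]] be symmetric positive definite with w₁₂ G₁₂ ≤ 0. Then Tr(W G⁻¹) ≥ w₁₁/a + w₂₂/b = Tr(W F⁻¹). -/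
open Matrix

lemma diag_pos_of_posDef (M : Matrix (Fin 2) (Fin 2) ℝ) (hM : M.PosDef) (i : Fin 2) :
    0 < M i i := by
  have := hM.dotProduct_mulVec_pos (x := Pi.single i 1) (by simp [Function.ne_iff])
  simpa [dotProduct, mulVec, Pi.single_apply, Finset.sum_ite_eq] using this

theorem stmt_13 (G : Matrix (Fin 2) (Fin 2) ℝ) (a b w₁₁ w₁₂ w₂₂ : ℝ)
    (hG : G.PosDef) (ha : 0 < a) (hb : 0 < b)
    (hG11 : G 0 0 ≤ a) (hG22 : G 1 1 ≤ b)
    (hW : (!![w₁₁, w₁₂; w₁₂, w₂₂] : Matrix (Fin 2) (Fin 2) ℝ).PosDef)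
    (hwG : w₁₂ * G 0 1 ≤ 0) :
    (!![w₁₁, w₁₂; w₁₂, w₂₂] * G⁻¹).trace ≥ w₁₁ / a + w₂₂ / b
    ∧ w₁₁ / a + w₂₂ / b
        = (!![w₁₁, w₁₂; w₁₂, w₂₂] * (Matrix.diagonal ![a, b])⁻¹).trace := by
  have h11 : 0 < G 0 0 := diag_pos_of_posDef G hG 0
  have h22 : 0 < G 1 1 := diag_pos_of_posDef G hG 1
  have hw11 : 0 < w₁₁ := by simpa using diag_pos_of_posDef _ hW 0
  have hw22 : 0 < w₂₂ := by simpa using diag_pos_of_posDef _ hW 1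
  have hsym : G 1 0 = G 0 1 := by
    have := hG.1
    have := congrFun (congrFun this.eq 0) 1
    simpa [conjTranspose_apply] using this
  have hd : 0 < G.det := hG.det_pos
  have hdet : G.det = G 0 0 * G 1 1 - G 0 1 * G 1 0 := Matrix.det_fin_two G
  constructor
  · have hGinv : G⁻¹ = (G.det)⁻¹ • !![G 1 1, -G 0 1; -G 1 0, G 0 0] := by
      rw [Matrix.inv_def, Matrix.adjugate_fin_two, Ring.inverse_eq_inv]
    rw [hGinv]
    have htr : (!![w₁₁, w₁₂; w₁₂, w₂₂] * ((G.det)⁻¹ • !![G 1 1, -G 0 1; -G 1 0, G 0 0])).trace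
        = (w₁₁ * G 1 1 - 2 * (w₁₂ * G 0 1) + w₂₂ * G 0 0) / G.det := by
      simp [Matrix.trace_fin_two, Matrix.mul_apply, Fin.sum_univ_two, hsym]
      ring
    rw [htr, ge_iff_le, div_add_div _ _ ha.ne' hb.ne', div_le_div_iff₀ (by positivity) hd]
    rw [hsym] at hdet
    have hda : G.det ≤ a * G 1 1 := by
      nlinarith [mul_le_mul_of_nonneg_right hG11 h22.le, sq_nonneg (G 0 1)]
    have hdb : G.det ≤ b * G 0 0 := by
      nlinarith [mul_le_mul_of_nonneg_left hG22 h11.le, sq_nonneg (G 0 1)]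
    have h1 : w₁₁*b*G.det ≤ w₁₁*b*(a*G 1 1) :=
      mul_le_mul_of_nonneg_left hda (by positivity)
    have h2 : w₂₂*a*G.det ≤ w₂₂*a*(b*G 0 0) :=
      mul_le_mul_of_nonneg_left hdb (by positivity)
    have h3 : 0 ≤ a*b*(-(w₁₂*G 0 1)) := by
      apply mul_nonneg (by positivity); linarith
    nlinarith
  · have hinv : (Matrix.diagonal ![a, b])⁻¹ = Matrix.diagonal ![a⁻¹, b⁻¹] := by
      apply Matrix.inv_eq_right_inv
      ext i j
      fin_cases i <;> fin_cases j <;>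
        simp [Matrix.mul_apply, Fin.sum_univ_two, Matrix.diagonal_apply, ha.ne', hb.ne']
    rw [hinv]
    simp [Matrix.trace_fin_two, Matrix.mul_apply, Fin.sum_univ_two, Matrix.vecMul,
      dotProduct, Matrix.diagonal_apply, div_eq_mul_inv]
end

section
/- Let a₁ = (1,0,0), a₂ = (cos θ, sin θ, 0) ∈ ℝ³ with θ ∈ (0, π), let φ₁, φ₂ ∈ ℝ not both zero, f₁ = φ₁ cos θ + φ₂, f₂ = φ₁ + φ₂ cos θ, s = φ₁f₂ + φ₂f₁ > 0, and define η₁ = −a₁ + (φ₂/s^{3/2})(√s − sin√s)(f₁a₁ − f₂a₂) − (2φ₂/s) sin²(√s/2)(a₁×a₂), and η₂ = −a₂ − (φ₁/s^{3/2})(√s − sin√s)(f₁a₁ − f₂a₂) + (2φ₁/s) sin²(√s/2)(a₁×a₂). Then (η₁×η₂)·n = 0, where n = (φ₁ + φ₂ cos θ, φ₂ sin θ, 0)/√s. -/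
open Real Matrix

theorem stmt_18 (θ φ₁ φ₂ : ℝ) (hθ : θ ∈ Set.Ioo 0 π) (hφ : ¬(φ₁ = 0 ∧ φ₂ = 0))
    (a₁ a₂ : Fin 3 → ℝ) (ha₁ : a₁ = ![1, 0, 0]) (ha₂ : a₂ = ![Real.cos θ, Real.sin θ, 0])
    (f₁ f₂ s : ℝ) (hf₁ : f₁ = φ₁ * Real.cos θ + φ₂) (hf₂ : f₂ = φ₁ + φ₂ * Real.cos θ)
    (hs : s = φ₁ * f₂ + φ₂ * f₁) (hspos : 0 < s)
    (η₁ η₂ n : Fin 3 → ℝ)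
    (hη₁ : η₁ = -a₁
      + (φ₂ / Real.sqrt s ^ 3 * (Real.sqrt s - Real.sin (Real.sqrt s))) • (f₁ • a₁ - f₂ • a₂)
      - (2 * φ₂ / s * Real.sin (Real.sqrt s / 2) ^ 2) • (a₁ ⨯₃ a₂))
    (hη₂ : η₂ = -a₂
      - (φ₁ / Real.sqrt s ^ 3 * (Real.sqrt s - Real.sin (Real.sqrt s))) • (f₁ • a₁ - f₂ • a₂)
      + (2 * φ₁ / s * Real.sin (Real.sqrt s / 2) ^ 2) • (a₁ ⨯₃ a₂))
    (hn : n = (Real.sqrt s)⁻¹ • ![φ₁ + φ₂ * Real.cos θ, φ₂ * Real.sin θ, 0]) :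
    (η₁ ⨯₃ η₂) ⬝ᵥ n = 0 := by
  subst ha₁ ha₂ hη₁ hη₂ hn hf₁ hf₂
  simp only [crossProduct, dotProduct, Fin.sum_univ_three]
  simp [Matrix.cons_val_zero, Matrix.cons_val_one]
  ring
end
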